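/- The count of admissible paths starting at type 𝟏 and ending at type 𝟑 satisfies: N(𝟑, a₁…a_n) is comparable to q_n when a₁ ≥ 2, and comparable to q_n/a₂ when a₁ = 1 (for n ≥ 3), with absolute implied constants. Here N(𝟑, a₁…a_n) := v_𝟑 Â_{a₁}⋯Â_{a_n}(1,1,1)ᵀ. -/
import Mathlib


/-- `Â_k` is the 3×3 matrix with rows `(0,1,0)`, `(k+1,0,k)`, `(k,0,k−1)`. -/
def Ahat (k : ℕ) : Matrix (Fin 3) (Fin 3) ℤ :=
  !![0, 1, 0; (k : ℤ) + 1, 0, (k : ℤ); (k : ℤ), 0, (k : ℤ) - 1]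

/-- `N(𝐭, a₁…a_n) = v_𝐭 Â_{a₁} ⋯ Â_{a_n} (1,1,1)ᵀ` (`𝐭 = 0,1,2` for types 𝟏, 𝟐, 𝟑). -/
def pathCount (t : Fin 3) (l : List ℕ) : ℤ :=
  ((l.map Ahat).prod.mulVec fun _ => 1) t

/-- Continued fraction denominators: `q₀ = 1`, `q₁ = a₁`,
`q_{j+1} = a_{j+1} q_j + q_{j-1}` (here `a 0 = a₁`, `a 1 = a₂`, ...). -/
def cfDenom (a : ℕ → ℕ) : ℕ → ℕ
  | 0 => 1
  | 1 => a 0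
  | n + 2 => a (n + 1) * cfDenom a (n + 1) + cfDenom a n

def Sft (a : ℕ → ℕ) : ℕ → ℕ := fun i => a (i + 1)

def QT : ℕ → (ℕ → ℕ) → ℤ × ℤ
  | 0, _ => (1, 0)
  | n+1, a => ((a 0 : ℤ) * (QT n (Sft a)).1 + (QT n (Sft a)).2, (QT n (Sft a)).1)

lemma prod_mulVec (n : ℕ) (a : ℕ → ℕ) :
    (((List.range n).map a).map Ahat).prod.mulVec (fun _ => (1:ℤ)) =
    ![2*(QT n a).2 + (-1)^n, 2*(QT n a).1 - (-1)^n,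
      2*((QT n a).1 - (QT n a).2) - (-1)^n] := by
  induction n generalizing a with
  | zero =>
    funext i
    fin_cases i <;> simp [QT, Matrix.mulVec, dotProduct, Fin.sum_univ_three]
  | succ n ih =>
    rw [List.range_succ_eq_map]
    simp only [List.map_cons, List.map_map, List.prod_cons]
    have h1 : (List.map (Ahat ∘ a ∘ Nat.succ) (List.range n)) =
        ((List.range n).map (Sft a)).map Ahat := by
      simp [List.map_map]
      intro b _; rfl
    rw [h1, ← Matrix.mulVec_mulVec, ih]
    funext i
    fin_cases i <;>
      simp [QT, Ahat, Matrix.mulVec, dotProduct, Fin.sum_univ_three, pow_succ] <;>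
      ring

lemma QT_rec (n : ℕ) : ∀ a : ℕ → ℕ,
    (QT (n+2) a).1 = (a (n+1) : ℤ) * (QT (n+1) a).1 + (QT n a).1 ∧
    (QT (n+2) a).2 = (a (n+1) : ℤ) * (QT (n+1) a).2 + (QT n a).2 := by
  induction n with
  | zero => intro a; simp [QT, Sft]; ring
  | succ n ih =>
    intro a
    have h := ih (Sft a)
    have hs : ∀ k, Sft a k = a (k+1) := fun _ => rfl
    constructor
    · show (a 0 : ℤ) * (QT (n+2) (Sft a)).1 + (QT (n+2) (Sft a)).2 = _
      rw [h.1, h.2, hs]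
      show _ = (a (n+2) : ℤ) * ((a 0 : ℤ) * (QT (n+1) (Sft a)).1 + (QT (n+1) (Sft a)).2)
          + ((a 0 : ℤ) * (QT n (Sft a)).1 + (QT n (Sft a)).2)
      ring
    · show (QT (n+2) (Sft a)).1 = _
      rw [h.1, hs]
      show _ = (a (n+2) : ℤ) * (QT (n+1) (Sft a)).1 + (QT n (Sft a)).1
      ring

lemma QT_fst_eq (n : ℕ) : ∀ a : ℕ → ℕ, (QT n a).1 = (cfDenom a n : ℤ) := by
  induction n using Nat.strong_induction_on with
  | _ n ih =>
    match n with
    | 0 => intro a; simp [QT, cfDenom]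
    | 1 => intro a; simp [QT, cfDenom]
    | n+2 =>
      intro a
      rw [(QT_rec n a).1, ih (n+1) (by omega) a, ih n (by omega) a]
      show _ = ((a (n+1) * cfDenom a (n+1) + cfDenom a n : ℕ) : ℤ)
      push_cast
      ring

lemma cfDenom_pos (a : ℕ → ℕ) (ha : ∀ i, 1 ≤ a i) : ∀ n, 1 ≤ cfDenom a n := by
  intro n
  induction n using Nat.strong_induction_on with
  | _ n ih =>
    match n with
    | 0 => simp [cfDenom]
    | 1 => simpa [cfDenom] using ha 0
    | n+2 =>
      have := ih n (by omega)
      simp only [cfDenom]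
      omega

lemma cfDenom_decomp (a : ℕ → ℕ) (k : ℕ) :
    (cfDenom a (k+2) : ℤ) = (a 0 : ℤ) * cfDenom (Sft a) (k+1) + cfDenom (Sft (Sft a)) k := by
  rw [← QT_fst_eq]
  show (a 0:ℤ) * (QT (k+1) (Sft a)).1 + (QT k (Sft (Sft a))).1 = _
  rw [QT_fst_eq, QT_fst_eq]

lemma cfDenom_sft_le (a : ℕ → ℕ) (ha : ∀ i, 1 ≤ a i) (k : ℕ) :
    (cfDenom (Sft a) k : ℤ) ≤ (cfDenom a (k+1) : ℤ) := by
  match k with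
  | 0 =>
    simp [cfDenom]
    exact_mod_cast ha 0
  | k+1 =>
    rw [cfDenom_decomp]
    have h1 : (1:ℤ) ≤ (a 0 : ℤ) := by exact_mod_cast ha 0
    have h2 : (1:ℤ) ≤ (cfDenom (Sft a) (k+1) : ℤ) := by
      exact_mod_cast cfDenom_pos (Sft a) (fun i => ha (i+1)) (k+1)
    have h3 : (0:ℤ) ≤ (cfDenom (Sft (Sft a)) k : ℤ) := by positivity
    nlinarith

lemma pathCount_eq (n : ℕ) (a : ℕ → ℕ) :
    pathCount 2 ((List.range n).map a) = 2*((QT n a).1 - (QT n a).2) - (-1)^n := by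
  unfold pathCount
  rw [prod_mulVec]
  simp

lemma QT_snd (n : ℕ) (a : ℕ → ℕ) : (QT (n+1) a).2 = (cfDenom (Sft a) n : ℤ) := by
  show (QT n (Sft a)).1 = _
  rw [QT_fst_eq]

/-- With absolute implied constants: for `n ≥ 3`, `N(𝟑, a₁…a_n)` is comparable to
`qₙ` when `a₁ ≥ 2` and comparable to `qₙ/a₂` when `a₁ = 1`. -/
theorem pathCount_three_comparable :
    ∃ c C : ℝ, 0 < c ∧ c < C ∧ ∀ n : ℕ, 3 ≤ n → ∀ a : ℕ → ℕ, (∀ i, 1 ≤ a i) →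
      (2 ≤ a 0 →
        c * (cfDenom a n : ℝ) ≤ (pathCount 2 ((List.range n).map a) : ℝ) ∧
          (pathCount 2 ((List.range n).map a) : ℝ) ≤ C * (cfDenom a n : ℝ)) ∧
      (a 0 = 1 →
        c * (cfDenom a n : ℝ) / (a 1 : ℝ) ≤ (pathCount 2 ((List.range n).map a) : ℝ) ∧
          (pathCount 2 ((List.range n).map a) : ℝ) ≤ C * (cfDenom a n : ℝ) / (a 1 : ℝ)) := by
  refine ⟨1/3, 3, by norm_num, by norm_num, ?_⟩
  intro n hn a ha
  obtain ⟨m, rfl⟩ : ∃ m, n = m + 3 := ⟨n - 3, by omega⟩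
  set P : ℤ := pathCount 2 ((List.range (m+3)).map a) with hP
  have hPeq : P = 2*((QT (m+3) a).1 - (QT (m+3) a).2) - (-1)^(m+3) := pathCount_eq _ _
  set ε : ℤ := (-1)^(m+3) with hε
  have hεb : ε = 1 ∨ ε = -1 := by
    rcases Nat.even_or_odd (m+3) with h | h
    · exact Or.inl (Even.neg_one_pow h)
    · exact Or.inr (Odd.neg_one_pow h)
  have hε1 : -1 ≤ ε ∧ ε ≤ 1 := by rcases hεb with h | h <;> simp [h]
  set q : ℤ := (cfDenom a (m+3) : ℤ) with hqdef
  set Qt : ℤ := (cfDenom (Sft a) (m+2) : ℤ) with hQtdef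
  set Qt2 : ℤ := (cfDenom (Sft (Sft a)) (m+1) : ℤ) with hQt2def
  set Qt3 : ℤ := (cfDenom (Sft (Sft (Sft a))) m : ℤ) with hQt3def
  have hq : (QT (m+3) a).1 = q := QT_fst_eq _ _
  have hqt : (QT (m+3) a).2 = Qt := QT_snd _ _
  have hP2 : P = 2*(q - Qt) - ε := by rw [hPeq, hq, hqt]
  have hI1 : q = (a 0 : ℤ) * Qt + Qt2 := cfDenom_decomp a (m+1)
  have hI2 : Qt = ((Sft a) 0 : ℤ) * Qt2 + Qt3 := cfDenom_decomp (Sft a) m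
  have hI3 : Qt3 ≤ Qt2 := cfDenom_sft_le (Sft (Sft a)) (fun i => ha (i+2)) m
  have hQtpos : (1:ℤ) ≤ Qt := by
    have := cfDenom_pos (Sft a) (fun i => ha (i+1)) (m+2); rw [hQtdef]; exact_mod_cast this
  have hQt2pos : (1:ℤ) ≤ Qt2 := by
    have := cfDenom_pos (Sft (Sft a)) (fun i => ha (i+2)) (m+1); rw [hQt2def]; exact_mod_cast this
  have hQt3pos : (1:ℤ) ≤ Qt3 := by
    have := cfDenom_pos (Sft (Sft (Sft a))) (fun i => ha (i+3)) m; rw [hQt3def]; exact_mod_cast this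
  have hqpos : (1:ℤ) ≤ q := by
    have := cfDenom_pos a ha (m+3); rw [hqdef]; exact_mod_cast this
  constructor
  · -- a 0 ≥ 2
    intro ha0
    have ha0' : (2:ℤ) ≤ (a 0 : ℤ) := by exact_mod_cast ha0
    have hmul : 2 * Qt ≤ (a 0 : ℤ) * Qt := by
      apply mul_le_mul_of_nonneg_right ha0' (by linarith)
    have hlow : q ≤ 3 * P := by linarith [hε1.1, hε1.2]
    have hhigh : P ≤ 3 * q := by linarith [hε1.1, hε1.2]
    constructor
    · have h' : ((cfDenom a (m+3) : ℕ) : ℝ) ≤ 3 * (P : ℝ) := by exact_mod_cast hlow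
      linarith
    · have h' : (P : ℝ) ≤ 3 * ((cfDenom a (m+3) : ℕ) : ℝ) := by exact_mod_cast hhigh
      linarith
  · -- a 0 = 1
    intro ha0
    have ha0' : ((a 0 : ℤ)) = 1 := by exact_mod_cast ha0
    have ha1' : (1:ℤ) ≤ (a 1 : ℤ) := by exact_mod_cast ha 1
    set A : ℤ := (a 1 : ℤ) with hA
    have hAs : ((Sft a) 0 : ℤ) = A := rfl
    rw [hAs] at hI2
    have hm1 : Qt2 ≤ A * Qt2 := le_mul_of_one_le_left (by linarith) ha1'
    have hm2 : A * ε ≤ A := by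
      have := mul_le_mul_of_nonneg_left hε1.2 (show (0:ℤ) ≤ A by linarith)
      simpa using this
    have hm2' : -A ≤ A * ε := by
      have := mul_le_mul_of_nonneg_left hε1.1 (show (0:ℤ) ≤ A by linarith)
      simpa using this
    have hm3 : A ≤ A * Qt2 := le_mul_of_one_le_right (by linarith) hQt2pos
    have hPQt2 : P = 2 * Qt2 - ε := by rw [hP2, hI1, ha0']; ring
    have hAP : A * P = 2 * (A * Qt2) - A * ε := by rw [hPQt2]; ring
    have hlow : q ≤ 3 * (A * P) := by linarith
    have hhigh : A * P ≤ 3 * q := by linarith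
    have ha1R : (0:ℝ) < (a 1 : ℝ) := by
      have := ha 1; positivity
    constructor
    · rw [div_le_iff₀ ha1R]
      have h' : ((cfDenom a (m+3) : ℕ) : ℝ) ≤ 3 * ((a 1 : ℕ) * (P : ℝ)) := by
        exact_mod_cast hlow
      linarith
    · rw [le_div_iff₀ ha1R]
      have h' : ((a 1 : ℕ) : ℝ) * (P : ℝ) ≤ 3 * ((cfDenom a (m+3) : ℕ) : ℝ) := by
        exact_mod_cast hhigh
      linarith
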